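/- Let p be a prime and let Q_n ∈ ℤ[X_0,…,X_n,Y_0,…,Y_n] be defined by the recurrence ∑_{i=0}^{n} p^i (X_i(1+Y_i))^{p^{n-i}} = ∑_{i=0}^{n} p^i X_i^{p^{n-i}} + ∑_{i=0}^{n} p^i Q_i^{p^{n-i}}. Then the difference Q_n − ∑_{i=0}^{n} X_i^{p^{n-i}} Y_i belongs to the ideal generated by the products Y_i Y_j for 0 ≤ i, j ≤ n. -/

import Mathlib

open MvPolynomial

namespace Stmt1Aux

abbrev R' : Type := MvPolynomial (ℕ ⊕ ℕ) ℤ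

def Sset (n : ℕ) : Set R' := {P : R' | ∃ i ≤ n, ∃ j ≤ n, P = X (Sum.inr i) * X (Sum.inr j)}

noncomputable def Iid (n : ℕ) : Ideal R' := Ideal.span (Sset n)

noncomputable def Jid (n : ℕ) : Ideal R' := Ideal.span {P : R' | ∃ j ≤ n, P = X (Sum.inr j)}

lemma Iid_mono {m n : ℕ} (h : m ≤ n) : Iid m ≤ Iid n :=
  Ideal.span_mono (fun P ⟨i, hi, j, hj, hP⟩ => ⟨i, hi.trans h, j, hj.trans h, hP⟩)

lemma Iid_le_Jid (n : ℕ) : Iid n ≤ Jid n := by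
  rw [Iid, Ideal.span_le]
  rintro P ⟨i, hi, j, hj, rfl⟩
  exact Ideal.mul_mem_right _ _ (Ideal.subset_span ⟨i, hi, rfl⟩)

lemma mul_Jid {n : ℕ} {a b : R'} (ha : a ∈ Jid n) (hb : b ∈ Jid n) : a * b ∈ Iid n := by
  have h : Jid n * Jid n ≤ Iid n := by
    rw [Jid, Ideal.span_mul_span', Ideal.span_le]
    rintro P ⟨x, ⟨i, hi, rfl⟩, y, ⟨j, hj, rfl⟩, rfl⟩
    exact Ideal.subset_span ⟨i, hi, j, hj, rfl⟩
  exact h (Ideal.mul_mem_mul ha hb)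

def good (n : ℕ) (m : (ℕ ⊕ ℕ) →₀ ℕ) : Prop :=
  ∃ i ≤ n, ∃ j ≤ n, Finsupp.single (Sum.inr i) 1 + Finsupp.single (Sum.inr j) 1 ≤ m

lemma good_mono {n : ℕ} {m m' : (ℕ ⊕ ℕ) →₀ ℕ} (h : good n m) (hle : m ≤ m') : good n m' := by
  obtain ⟨i, hi, j, hj, hle'⟩ := h
  exact ⟨i, hi, j, hj, hle'.trans hle⟩

lemma XY_eq (i j : ℕ) : (X (Sum.inr i) * X (Sum.inr j) : R') =
    monomial (Finsupp.single (Sum.inr i) 1 + Finsupp.single (Sum.inr j) 1) 1 := by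
  rw [show (X (Sum.inr i) : R') = monomial (Finsupp.single (Sum.inr i) 1) 1 from rfl,
    show (X (Sum.inr j) : R') = monomial (Finsupp.single (Sum.inr j) 1) 1 from rfl,
    monomial_mul, one_mul]

lemma mem_Iid_iff {n : ℕ} {f : R'} :
    f ∈ Iid n ↔ ∀ m, ¬ good n m → coeff m f = 0 := by
  constructor
  · intro hf
    refine Submodule.span_induction
      (p := fun x _ => ∀ m, ¬ good n m → coeff m x = 0) ?_ ?_ ?_ ?_ hf
    · rintro x ⟨i, hi, j, hj, rfl⟩ m hm
      rw [XY_eq, coeff_monomial]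
      split_ifs with h
      · exact absurd ⟨i, hi, j, hj, le_of_eq h⟩ hm
      · rfl
    · intro m hm; simp
    · intro x y _ _ hx hy m hm
      simp [coeff_add, hx m hm, hy m hm]
    · intro a x _ hx m hm
      rw [smul_eq_mul, coeff_mul]
      apply Finset.sum_eq_zero
      rintro ⟨u, v⟩ huv
      rw [Finset.HasAntidiagonal.mem_antidiagonal] at huv
      have hv : ¬ good n v := fun hg => hm (good_mono hg (by rw [← huv]; exact le_add_self))
      rw [hx v hv, mul_zero]
  · intro h
    rw [← support_sum_monomial_coeff f]
    apply Ideal.sum_mem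
    intro m hm
    have hg : good n m := by
      by_contra hng
      exact (mem_support_iff.mp hm) (h m hng)
    obtain ⟨i, hi, j, hj, hle⟩ := hg
    have heq : (monomial m) (coeff m f) = (X (Sum.inr i) * X (Sum.inr j)) *
        monomial (m - (Finsupp.single (Sum.inr i) 1 + Finsupp.single (Sum.inr j) 1))
          (coeff m f) := by
      rw [XY_eq, monomial_mul, one_mul, add_tsub_cancel_of_le hle]
    rw [heq]
    exact Ideal.mul_mem_right _ _ (Ideal.subset_span ⟨i, hi, j, hj, rfl⟩)

lemma cancel {n : ℕ} {c : ℤ} (hc : c ≠ 0) {f : R'} (h : C c * f ∈ Iid n) : f ∈ Iid n := by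
  rw [mem_Iid_iff] at h ⊢
  intro m hm
  have h' := h m hm
  rw [coeff_C_mul] at h'
  exact (mul_eq_zero.mp h').resolve_left hc

lemma one_add_pow (y : R') (m : ℕ) : ∃ g : R', (1 + y) ^ m = 1 + (m : R') * y + y * y * g := by
  induction m with
  | zero => exact ⟨0, by simp⟩
  | succ m ih =>
    obtain ⟨g, hg⟩ := ih
    exact ⟨g + (m : R') + y * g, by rw [pow_succ, hg]; push_cast; ring⟩

end Stmt1Aux

/-- Let `p` be a prime and let `Q n ∈ ℤ[X_0,…,X_n,Y_0,…,Y_n]` be defined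
by the recurrence
`∑_{i=0}^{n} p^i (X_i(1+Y_i))^{p^{n-i}} = ∑_{i=0}^{n} p^i X_i^{p^{n-i}} + ∑_{i=0}^{n} p^i Q_i^{p^{n-i}}`.
Then `Q n − ∑_{i=0}^{n} X_i^{p^{n-i}} Y_i` belongs to the ideal generated by the
products `Y_i Y_j` for `0 ≤ i, j ≤ n`.
Here `X i` is `X (Sum.inl i)` and `Y i` is `X (Sum.inr i)`. -/
theorem stmt1 (p : ℕ) (hp : p.Prime) (Q : ℕ → MvPolynomial (ℕ ⊕ ℕ) ℤ)
    (hQ : ∀ n : ℕ,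
      ∑ i ∈ Finset.range (n + 1),
        (p : MvPolynomial (ℕ ⊕ ℕ) ℤ) ^ i *
          (X (Sum.inl i) * (1 + X (Sum.inr i))) ^ (p ^ (n - i)) =
      ∑ i ∈ Finset.range (n + 1),
        (p : MvPolynomial (ℕ ⊕ ℕ) ℤ) ^ i * (X (Sum.inl i)) ^ (p ^ (n - i)) +
      ∑ i ∈ Finset.range (n + 1),
        (p : MvPolynomial (ℕ ⊕ ℕ) ℤ) ^ i * (Q i) ^ (p ^ (n - i))) :
    ∀ n : ℕ,
      Q n - ∑ i ∈ Finset.range (n + 1), (X (Sum.inl i)) ^ (p ^ (n - i)) * X (Sum.inr i)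
        ∈ Ideal.span {P : MvPolynomial (ℕ ⊕ ℕ) ℤ |
            ∃ i ≤ n, ∃ j ≤ n, P = X (Sum.inr i) * X (Sum.inr j)} := by
  intro n
  induction n using Nat.strong_induction_on with
  | _ n IH =>
  show Q n - ∑ i ∈ Finset.range (n + 1), (X (Sum.inl i)) ^ (p ^ (n - i)) * X (Sum.inr i)
      ∈ Stmt1Aux.Iid n
  have hL : ∀ k, k ≤ n →
      (∑ j ∈ Finset.range (k + 1),
        (X (Sum.inl j) : Stmt1Aux.R') ^ (p ^ (k - j)) * X (Sum.inr j)) ∈ Stmt1Aux.Jid n := by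
    intro k hk
    apply Ideal.sum_mem
    intro j hj
    exact Ideal.mul_mem_left _ _ (Ideal.subset_span
      ⟨j, le_trans (Nat.lt_succ_iff.mp (Finset.mem_range.mp hj)) hk, rfl⟩)
  have hQJ : ∀ i, i < n → Q i ∈ Stmt1Aux.Jid n := by
    intro i hi
    have h1 : Q i - ∑ j ∈ Finset.range (i + 1),
        (X (Sum.inl j) : Stmt1Aux.R') ^ (p ^ (i - j)) * X (Sum.inr j) ∈ Stmt1Aux.Iid n :=
      Stmt1Aux.Iid_mono (le_of_lt hi) (IH i hi)
    have h2 := hL i (le_of_lt hi)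
    have h3 := add_mem (Stmt1Aux.Iid_le_Jid n h1) h2
    simpa using h3
  have hQpow : ∀ i, i < n → (Q i) ^ (p ^ (n - i)) ∈ Stmt1Aux.Iid n := by
    intro i hi
    have h2 : 2 ≤ p ^ (n - i) := by
      calc 2 ≤ p := hp.two_le
        _ = p ^ 1 := (pow_one p).symm
        _ ≤ p ^ (n - i) := Nat.pow_le_pow_right hp.pos (by omega)
    obtain ⟨k, hk⟩ : ∃ k, p ^ (n - i) = k + 2 := ⟨p ^ (n - i) - 2, by omega⟩
    rw [hk, show (Q i) ^ (k + 2) = (Q i) ^ k * (Q i * Q i) by ring]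
    exact Ideal.mul_mem_left _ _ (Stmt1Aux.mul_Jid (hQJ i hi) (hQJ i hi))
  have hbr : ∀ i ∈ Finset.range (n + 1),
      ((X (Sum.inl i) : Stmt1Aux.R') * (1 + X (Sum.inr i))) ^ (p ^ (n - i))
        - (X (Sum.inl i)) ^ (p ^ (n - i))
        - (p : Stmt1Aux.R') ^ (n - i) * ((X (Sum.inl i)) ^ (p ^ (n - i)) * X (Sum.inr i))
        ∈ Stmt1Aux.Iid n := by
    intro i hi
    obtain ⟨g, hg⟩ := Stmt1Aux.one_add_pow (X (Sum.inr i) : Stmt1Aux.R') (p ^ (n - i))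
    have heq : ((X (Sum.inl i) : Stmt1Aux.R') * (1 + X (Sum.inr i))) ^ (p ^ (n - i))
        - (X (Sum.inl i)) ^ (p ^ (n - i))
        - (p : Stmt1Aux.R') ^ (n - i) * ((X (Sum.inl i)) ^ (p ^ (n - i)) * X (Sum.inr i))
        = (X (Sum.inr i) * X (Sum.inr i)) * ((X (Sum.inl i)) ^ (p ^ (n - i)) * g) := by
      rw [mul_pow, hg]; push_cast; ring
    rw [heq]
    exact Ideal.mul_mem_right _ _ (Ideal.subset_span
      ⟨i, Nat.lt_succ_iff.mp (Finset.mem_range.mp hi), i,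
        Nat.lt_succ_iff.mp (Finset.mem_range.mp hi), rfl⟩)
  have e1 : ∀ i ∈ Finset.range (n + 1),
      (p : Stmt1Aux.R') ^ i * ((p : Stmt1Aux.R') ^ (n - i) *
        ((X (Sum.inl i) : Stmt1Aux.R') ^ (p ^ (n - i)) * X (Sum.inr i)))
      = (p : Stmt1Aux.R') ^ n * ((X (Sum.inl i) : Stmt1Aux.R') ^ (p ^ (n - i)) * X (Sum.inr i)) := by
    intro i hi
    rw [← mul_assoc, ← pow_add, Nat.add_sub_cancel' (Nat.lt_succ_iff.mp (Finset.mem_range.mp hi))]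
  have hsum : ∑ i ∈ Finset.range (n + 1), (p : Stmt1Aux.R') ^ i *
      (((X (Sum.inl i) : Stmt1Aux.R') * (1 + X (Sum.inr i))) ^ (p ^ (n - i))
        - (X (Sum.inl i)) ^ (p ^ (n - i))
        - (p : Stmt1Aux.R') ^ (n - i) * ((X (Sum.inl i)) ^ (p ^ (n - i)) * X (Sum.inr i)))
      = (∑ i ∈ Finset.range (n + 1),
          (p : MvPolynomial (ℕ ⊕ ℕ) ℤ) ^ i *
            (X (Sum.inl i) * (1 + X (Sum.inr i))) ^ (p ^ (n - i)))
      - (∑ i ∈ Finset.range (n + 1),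
          (p : MvPolynomial (ℕ ⊕ ℕ) ℤ) ^ i * (X (Sum.inl i)) ^ (p ^ (n - i)))
      - (p : Stmt1Aux.R') ^ n *
          ∑ i ∈ Finset.range (n + 1), (X (Sum.inl i)) ^ (p ^ (n - i)) * X (Sum.inr i) := by
    rw [Finset.mul_sum, ← Finset.sum_sub_distrib, ← Finset.sum_sub_distrib]
    apply Finset.sum_congr rfl
    intro i hi
    rw [← e1 i hi]
    ring
  have h0 : (∑ i ∈ Finset.range (n + 1),
        (p : MvPolynomial (ℕ ⊕ ℕ) ℤ) ^ i *
          (X (Sum.inl i) * (1 + X (Sum.inr i))) ^ (p ^ (n - i)))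
      = (∑ i ∈ Finset.range (n + 1),
          (p : MvPolynomial (ℕ ⊕ ℕ) ℤ) ^ i * (X (Sum.inl i)) ^ (p ^ (n - i)))
      + ((∑ i ∈ Finset.range n,
          (p : MvPolynomial (ℕ ⊕ ℕ) ℤ) ^ i * (Q i) ^ (p ^ (n - i)))
        + (p : Stmt1Aux.R') ^ n * Q n) := by
    rw [hQ n]
    congr 1
    rw [Finset.sum_range_succ]
    simp [Nat.sub_self]
  have h1 : (p : Stmt1Aux.R') ^ n *
      (Q n - ∑ i ∈ Finset.range (n + 1), (X (Sum.inl i)) ^ (p ^ (n - i)) * X (Sum.inr i))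
      = (∑ i ∈ Finset.range (n + 1), (p : Stmt1Aux.R') ^ i *
          (((X (Sum.inl i) : Stmt1Aux.R') * (1 + X (Sum.inr i))) ^ (p ^ (n - i))
            - (X (Sum.inl i)) ^ (p ^ (n - i))
            - (p : Stmt1Aux.R') ^ (n - i) * ((X (Sum.inl i)) ^ (p ^ (n - i)) * X (Sum.inr i))))
        - ∑ i ∈ Finset.range n,
            (p : MvPolynomial (ℕ ⊕ ℕ) ℤ) ^ i * (Q i) ^ (p ^ (n - i)) := by
    linear_combination -hsum - h0
  have h2 : (p : Stmt1Aux.R') ^ n *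
      (Q n - ∑ i ∈ Finset.range (n + 1), (X (Sum.inl i)) ^ (p ^ (n - i)) * X (Sum.inr i))
      ∈ Stmt1Aux.Iid n := by
    rw [h1]
    exact sub_mem
      (Ideal.sum_mem _ fun i hi => Ideal.mul_mem_left _ _ (hbr i hi))
      (Ideal.sum_mem _ fun i hi => Ideal.mul_mem_left _ _ (hQpow i (Finset.mem_range.mp hi)))
  have h3 : C ((p : ℤ) ^ n) *
      (Q n - ∑ i ∈ Finset.range (n + 1), (X (Sum.inl i)) ^ (p ^ (n - i)) * X (Sum.inr i))
      ∈ Stmt1Aux.Iid n := by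
    rw [map_pow, map_natCast]
    exact h2
  exact Stmt1Aux.cancel (pow_ne_zero n (by exact_mod_cast hp.ne_zero)) h3
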